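/- Let m be a monad on c ⥤ Type whose underlying endofunctor is familial with positions m(1) and arities m[M], and suppose the multiplication μ of m is cartesian (every naturality square of μ is a pullback). For M ∈ m(1)(C) and a morphism of c-copresheaves N : m[M] ⟶ m(1), let μ(M, N) ∈ m(1)(C) denote the image of the corresponding element of m(m(1))(C) ≅ Σ_{M ∈ m(1)(C)} Hom(m[M], m(1)) under the multiplication component at the terminal copresheaf m(m(⊤)) → m(⊤). Then the arity m[μ(M, N)] is isomorphic, as a c-copresheaf, to the colimit colim_{z ∈ el(m[M])} m[N(z)], indexed by the category of elements of m[M]. -/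

import Mathlib

namespace Fam
open CategoryTheory Opposite Limits
private lemma sigmaExt {α : Type} {β : α → Type} {a a' : α} {b : β a} {b' : β a'}
    (h : a = a') (h' : HEq b b') : (⟨a, b⟩ : Σ x, β x) = ⟨a', b'⟩ := by
  subst h; cases h'; rfl
variable {c d : Type} [SmallCategory c] [SmallCategory d]
def elHom (pos : c ⥤ Type) {C C' : c} (f : C ⟶ C') (I : pos.obj C) :
    pos.elementsMk C I ⟶ pos.elementsMk C' (pos.map f I) :=
  CategoryOfElements.homMk _ _ f rfl
lemma eqToHom_val {pos : c ⥤ Type} {x y : pos.Elements} (E : x = y) :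
    (eqToHom E).val = eqToHom (congrArg Sigma.fst E) := by
  subst E; simp
@[simps]
def famApply (pos : c ⥤ Type) (ar : pos.Elementsᵒᵖ ⥤ d ⥤ Type) :
    (d ⥤ Type) ⥤ c ⥤ Type where
  obj X :=
    { obj := fun C => Σ I : pos.obj C, ar.obj (op (pos.elementsMk C I)) ⟶ X
      map := fun {C C'} f => TypeCat.ofHom fun x => ⟨pos.map f x.1, ar.map (elHom pos f x.1).op ≫ x.2⟩
      map_id := by
        intro C
        refine ConcreteCategory.hom_ext _ _ (fun x => ?_)
        obtain ⟨I, g⟩ := x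
        have h : pos.map (𝟙 C) I = I := by simp
        have hE : pos.elementsMk C I = pos.elementsMk C (pos.map (𝟙 C) I) := by rw [h]
        have he : elHom pos (𝟙 C) I = eqToHom hE := by
          apply CategoryOfElements.ext
          rw [eqToHom_val]
          simp [elHom]
        dsimp
        refine sigmaExt h ?_
        rw [he]
        simp [eqToHom_op, eqToHom_map]
      map_comp := by
        intro C C' C'' f g
        refine ConcreteCategory.hom_ext _ _ (fun x => ?_)
        obtain ⟨I, u⟩ := x
        have h : pos.map (f ≫ g) I = pos.map g (pos.map f I) := by simp
        have hE : pos.elementsMk C'' (pos.map (f ≫ g) I)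
            = pos.elementsMk C'' (pos.map g (pos.map f I)) := by rw [h]
        have hcomp : elHom pos f I ≫ elHom pos g (pos.map f I)
            = elHom pos (f ≫ g) I ≫ eqToHom hE := by
          apply CategoryOfElements.ext
          rw [CategoryOfElements.comp_val, CategoryOfElements.comp_val, eqToHom_val]
          simp [elHom]
        dsimp
        refine sigmaExt h ?_
        rw [← Category.assoc, ← ar.map_comp, ← op_comp, hcomp, op_comp, ar.map_comp,
          Category.assoc]
        simp [eqToHom_op, eqToHom_map] }
  map {X Y} t :=
    { app := fun C => TypeCat.ofHom fun x => ⟨x.1, x.2 ≫ t⟩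
      naturality := by
        intro C C' f
        refine ConcreteCategory.hom_ext _ _ (fun x => ?_)
        dsimp
        rw [Category.assoc] }
  map_id := by
    intro X
    apply NatTrans.ext
    funext C
    refine ConcreteCategory.hom_ext _ _ (fun x => ?_)
    dsimp
    rw [Category.comp_id]
  map_comp := by
    intro X Y Z s t
    apply NatTrans.ext
    funext C
    refine ConcreteCategory.hom_ext _ _ (fun x => ?_)
    dsimp
    rw [Category.assoc]

/-- The unit exhibiting `famApply pos (ar ⋙ G)` as the right coclosure `⌈F/G⌉`,
i.e. the left Kan extension of the familial functor `F = famApply pos ar` along `G`. -/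
def coclosureUnit {e : Type} [SmallCategory e] (pos : c ⥤ Type)
    (ar : pos.Elementsᵒᵖ ⥤ e ⥤ Type) (G : (e ⥤ Type) ⥤ d ⥤ Type) :
    famApply pos ar ⟶ G ⋙ famApply pos (ar ⋙ G) where
  app X :=
    { app := fun C => TypeCat.ofHom fun x => ⟨x.1, G.map x.2⟩
      naturality := by
        intro C C' f
        refine ConcreteCategory.hom_ext _ _ (fun x => ?_)
        show (⟨pos.map f x.1, G.map (ar.map (elHom pos f x.1).op ≫ x.2)⟩ :
            Σ I : pos.obj C', (ar ⋙ G).obj (op (pos.elementsMk C' I)) ⟶ G.obj X)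
          = ⟨pos.map f x.1, G.map (ar.map (elHom pos f x.1).op) ≫ G.map x.2⟩
        rw [G.map_comp] }
  naturality := by
    intro X Y t
    apply NatTrans.ext
    funext C
    refine ConcreteCategory.hom_ext _ _ (fun x => ?_)
    show (⟨x.1, G.map (x.2 ≫ t)⟩ :
        Σ I : pos.obj C, (ar ⋙ G).obj (op (pos.elementsMk C I)) ⟶ G.obj Y)
      = ⟨x.1, G.map x.2 ≫ G.map t⟩
    rw [G.map_comp]

section Statement13

variable {c : Type} [SmallCategory c]
  (m : Monad (c ⥤ Type)) {posm : c ⥤ Type} (arm : posm.Elementsᵒᵖ ⥤ c ⥤ Type)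

/-- The terminal copresheaf on `c`. -/
def termPSh : c ⥤ Type := (Functor.const c).obj PUnit

/-- The unique map to the terminal copresheaf. -/
def toTerm (Y : c ⥤ Type) : Y ⟶ termPSh where
  app := fun _ => TypeCat.ofHom fun _ => PUnit.unit

instance (Y : c ⥤ Type) : Subsingleton (Y ⟶ termPSh) :=
  ⟨fun a b => by
    apply NatTrans.ext
    ext C y
    rfl⟩

variable (em : famApply posm arm ≅ (m : (c ⥤ Type) ⥤ c ⥤ Type))

/-- The canonical identification of positions with elements of `m(⊤)`:
`I ↦ (I, ! : m[I] ⟶ ⊤)`. -/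
def posToM : posm ⟶ (m : (c ⥤ Type) ⥤ c ⥤ Type).obj termPSh where
  app C := TypeCat.ofHom fun I => (em.hom.app termPSh).app C ⟨I, toTerm _⟩
  naturality := by
    intro C C' f
    ext I
    have hnat := NatTrans.naturality_apply (em.hom.app termPSh) f
      (⟨I, toTerm _⟩ : Σ J : posm.obj C, arm.obj (op (posm.elementsMk C J)) ⟶ termPSh)
    show (em.hom.app termPSh).app C' ⟨posm.map f I, toTerm _⟩
      = ((m : (c ⥤ Type) ⥤ c ⥤ Type).obj termPSh).map f
          ((em.hom.app termPSh).app C ⟨I, toTerm _⟩)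
    rw [← hnat]
    exact congrArg (fun t => (em.hom.app termPSh).app C'
      (Sigma.mk (posm.map f I) t)) (Subsingleton.elim _ _)

/-- The composite operation `μ(M, N) ∈ m(1)(C)` of an operation `M ∈ m(1)(C)` with a family
of operations `N : m[M] ⟶ m(1)`: the image of the corresponding element of `m(m(⊤))(C)`
under the multiplication of `m` at the terminal copresheaf. -/
def compOp (C : c) (M : posm.obj C)
    (N : arm.obj (op (posm.elementsMk C M)) ⟶ posm) : posm.obj C :=
  ((em.inv.app termPSh).app C ((m.μ.app termPSh).app C
    ((em.hom.app ((m : (c ⥤ Type) ⥤ c ⥤ Type).obj termPSh)).app C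
      ⟨M, N ≫ posToM m arm em⟩))).1

section Aux13

variable (C : c) (M : posm.obj C) (N : arm.obj (op (posm.elementsMk C M)) ⟶ posm)

/-- The defining equivalence of a familial functor, pointwise. -/
def eEq (X : c ⥤ Type) (D : c) :
    (Σ I : posm.obj D, arm.obj (op (posm.elementsMk D I)) ⟶ X) ≃
      ((m : (c ⥤ Type) ⥤ c ⥤ Type).obj X).obj D where
  toFun := (em.hom.app X).app D
  invFun := (em.inv.app X).app D
  left_inv p := types_congr_hom (NatTrans.congr_app (NatTrans.congr_app em.hom_inv_id X) D) p
  right_inv y := types_congr_hom (NatTrans.congr_app (NatTrans.congr_app em.inv_hom_id X) D) y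

lemma eEq_natX {X Y : c ⥤ Type} (h : X ⟶ Y) (D : c)
    (p : Σ I : posm.obj D, arm.obj (op (posm.elementsMk D I)) ⟶ X) :
    ((m : (c ⥤ Type) ⥤ c ⥤ Type).map h).app D (eEq m arm em X D p)
      = eEq m arm em Y D ⟨p.1, p.2 ≫ h⟩ := by
  exact (types_congr_hom (NatTrans.congr_app (em.hom.naturality h) D) p).symm

lemma eEq_natC (X : c ⥤ Type) {D D' : c} (f : D ⟶ D')
    (p : Σ I : posm.obj D, arm.obj (op (posm.elementsMk D I)) ⟶ X) :
    ((m : (c ⥤ Type) ⥤ c ⥤ Type).obj X).map f (eEq m arm em X D p)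
      = eEq m arm em X D' ⟨posm.map f p.1, arm.map (elHom posm f p.1).op ≫ p.2⟩ := by
  exact (NatTrans.naturality_apply (em.hom.app X) f p).symm

lemma eEq_snd_inj (X : c ⥤ Type) (D : c) {I : posm.obj D}
    {u v : arm.obj (op (posm.elementsMk D I)) ⟶ X}
    (h : eEq m arm em X D ⟨I, u⟩ = eEq m arm em X D ⟨I, v⟩) : u = v := by
  have h2 := (eEq m arm em X D).injective h
  exact eq_of_heq (congr_arg_heq Sigma.snd h2)

/-- Extract the second component of a pair whose first component is known. -/
def extr {X : c ⥤ Type} {D : c} (I : posm.obj D)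
    (p : Σ J : posm.obj D, arm.obj (op (posm.elementsMk D J)) ⟶ X) (h : p.1 = I) :
    arm.obj (op (posm.elementsMk D I)) ⟶ X :=
  eqToHom (by rw [h]) ≫ p.2

lemma extr_congr {X : c ⥤ Type} {D : c} {I : posm.obj D}
    {p p' : Σ J : posm.obj D, arm.obj (op (posm.elementsMk D J)) ⟶ X}
    (hp : p = p') (h : p.1 = I) (h' : p'.1 = I) :
    extr arm I p h = extr arm I p' h' := by
  subst hp; rfl

lemma extr_mk {X : c ⥤ Type} {D : c} {I : posm.obj D}
    (u : arm.obj (op (posm.elementsMk D I)) ⟶ X)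
    (h : (⟨I, u⟩ : Σ J : posm.obj D, arm.obj (op (posm.elementsMk D J)) ⟶ X).1 = I) :
    extr arm I ⟨I, u⟩ h = u := by
  simp [extr]

lemma mk_extr {X : c ⥤ Type} {D : c} (I : posm.obj D)
    (p : Σ J : posm.obj D, arm.obj (op (posm.elementsMk D J)) ⟶ X) (h : p.1 = I) :
    (⟨I, extr arm I p h⟩ : Σ J : posm.obj D, arm.obj (op (posm.elementsMk D J)) ⟶ X) = p := by
  obtain ⟨J, u⟩ := p
  cases h
  simp [extr]

lemma extr_comp {X Y : c ⥤ Type} {D : c} (I : posm.obj D)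
    (p : Σ J : posm.obj D, arm.obj (op (posm.elementsMk D J)) ⟶ X) (h : p.1 = I) (w : X ⟶ Y) :
    extr arm I p h ≫ w
      = extr arm I (⟨p.1, p.2 ≫ w⟩ : Σ J : posm.obj D, arm.obj (op (posm.elementsMk D J)) ⟶ Y) h := by
  simp [extr]

lemma posToM_apply (D : c) (I : posm.obj D) :
    (posToM m arm em).app D I = eEq m arm em termPSh D ⟨I, toTerm _⟩ := rfl

lemma fstEq {X : c ⥤ Type} {D : c} (I : posm.obj D)
    (y : ((m : (c ⥤ Type) ⥤ c ⥤ Type).obj X).obj D)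
    (hy : ((m : (c ⥤ Type) ⥤ c ⥤ Type).map (toTerm X)).app D y = (posToM m arm em).app D I) :
    ((eEq m arm em X D).symm y).1 = I := by
  have h1 : ((m : (c ⥤ Type) ⥤ c ⥤ Type).map (toTerm X)).app D
      (eEq m arm em X D ((eEq m arm em X D).symm y)) = (posToM m arm em).app D I := by
    rw [Equiv.apply_symm_apply]; exact hy
  rw [eEq_natX, posToM_apply] at h1
  exact congrArg Sigma.fst ((eEq m arm em termPSh D).injective h1)

lemma posToM_compOp :
    (posToM m arm em).app C (compOp m arm em C M N)
      = (m.μ.app termPSh).app C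
          (eEq m arm em ((m : (c ⥤ Type) ⥤ c ⥤ Type).obj termPSh) C ⟨M, N ≫ posToM m arm em⟩) := by
  set y := (m.μ.app termPSh).app C
      (eEq m arm em ((m : (c ⥤ Type) ⥤ c ⥤ Type).obj termPSh) C ⟨M, N ≫ posToM m arm em⟩) with hy
  have hc : compOp m arm em C M N = ((eEq m arm em termPSh C).symm y).1 := rfl
  rw [posToM_apply, hc]
  have h2 : (⟨((eEq m arm em termPSh C).symm y).1, toTerm _⟩ :
      Σ I : posm.obj C, arm.obj (op (posm.elementsMk C I)) ⟶ termPSh)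
      = (eEq m arm em termPSh C).symm y :=
    congrArg (Sigma.mk _) (Subsingleton.elim _ _)
  rw [h2]
  exact (eEq m arm em termPSh C).apply_symm_apply y

/- Pullback helpers in `Type`. -/

lemma pb_ext {P A B Z : Type} {fst : P ⟶ A} {snd : P ⟶ B} {f : A ⟶ Z} {g : B ⟶ Z}
    (h : IsPullback fst snd f g) {w w' : P} (h1 : fst w = fst w') (h2 : snd w = snd w') :
    w = w' := by
  have h3 := PullbackCone.IsLimit.hom_ext h.isLimit
    (k := TypeCat.ofHom fun _ : PUnit => w) (l := TypeCat.ofHom fun _ : PUnit => w')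
    (ConcreteCategory.hom_ext _ _ fun _ => h1) (ConcreteCategory.hom_ext _ _ fun _ => h2)
  exact types_congr_hom h3 PUnit.unit

noncomputable def pbFiber {P A B Z : Type} {fst : P ⟶ A} {snd : P ⟶ B} {f : A ⟶ Z} {g : B ⟶ Z}
    (h : IsPullback fst snd f g) (a : A) :
    {w : P // fst w = a} ≃ {y : B // g y = f a} where
  toFun w := ⟨snd w.1, by
    have hc := types_congr_hom h.w w.1
    simp only [types_comp_apply] at hc
    rw [← hc, w.2]⟩
  invFun y := ⟨PullbackCone.IsLimit.lift h.isLimit (TypeCat.ofHom fun _ : PUnit => a)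
      (TypeCat.ofHom fun _ => y.1)
      (ConcreteCategory.hom_ext _ _ fun _ => y.2.symm) PUnit.unit,
    types_congr_hom (PullbackCone.IsLimit.lift_fst h.isLimit (TypeCat.ofHom fun _ : PUnit => a)
      (TypeCat.ofHom fun _ => y.1)
      (ConcreteCategory.hom_ext _ _ fun _ => y.2.symm)) PUnit.unit⟩
  left_inv w := by
    apply Subtype.ext
    refine pb_ext h ?_ ?_
    · exact (types_congr_hom (PullbackCone.IsLimit.lift_fst h.isLimit _ _ _) PUnit.unit).trans w.2.symm
    · exact types_congr_hom (PullbackCone.IsLimit.lift_snd h.isLimit _ _ _) PUnit.unit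
  right_inv y := by
    apply Subtype.ext
    exact types_congr_hom (PullbackCone.IsLimit.lift_snd h.isLimit _ _ _) PUnit.unit

/- The three intermediate sets. -/

abbrev Fib1 (X : c ⥤ Type) : Type :=
  {y : ((m : (c ⥤ Type) ⥤ c ⥤ Type).obj X).obj C //
    ((m : (c ⥤ Type) ⥤ c ⥤ Type).map (toTerm X)).app C y
      = (posToM m arm em).app C (compOp m arm em C M N)}

abbrev Fib2 (X : c ⥤ Type) : Type :=
  {w : ((m : (c ⥤ Type) ⥤ c ⥤ Type).obj ((m : (c ⥤ Type) ⥤ c ⥤ Type).obj X)).obj C //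
    ((m : (c ⥤ Type) ⥤ c ⥤ Type).map ((m : (c ⥤ Type) ⥤ c ⥤ Type).map (toTerm X))).app C w
      = eEq m arm em ((m : (c ⥤ Type) ⥤ c ⥤ Type).obj termPSh) C ⟨M, N ≫ posToM m arm em⟩}

abbrev GSet (X : c ⥤ Type) : Type :=
  {g : arm.obj (op (posm.elementsMk C M)) ⟶ (m : (c ⥤ Type) ⥤ c ⥤ Type).obj X //
    g ≫ (m : (c ⥤ Type) ⥤ c ⥤ Type).map (toTerm X) = N ≫ posToM m arm em}

/- Step A. -/

def stepA (X : c ⥤ Type) :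
    (arm.obj (op (posm.elementsMk C (compOp m arm em C M N))) ⟶ X) ≃ Fib1 m arm em C M N X where
  toFun u := ⟨eEq m arm em X C ⟨compOp m arm em C M N, u⟩, by
    rw [eEq_natX, posToM_apply]
    exact congrArg (eEq m arm em termPSh C) (congrArg (Sigma.mk _) (Subsingleton.elim _ _))⟩
  invFun y := extr arm (compOp m arm em C M N) ((eEq m arm em X C).symm y.1)
    (fstEq m arm em _ y.1 y.2)
  left_inv u := by
    have hq := (eEq m arm em X C).symm_apply_apply ⟨compOp m arm em C M N, u⟩
    exact (extr_congr arm hq (congrArg Sigma.fst hq) rfl).trans (extr_mk arm u rfl)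
  right_inv y := by
    apply Subtype.ext
    exact (congrArg (eEq m arm em X C)
      (mk_extr arm (compOp m arm em C M N) ((eEq m arm em X C).symm y.1)
        (fstEq m arm em _ y.1 y.2))).trans ((eEq m arm em X C).apply_symm_apply y.1)

def tA {X Y : c ⥤ Type} (h : X ⟶ Y) (y : Fib1 m arm em C M N X) : Fib1 m arm em C M N Y :=
  ⟨((m : (c ⥤ Type) ⥤ c ⥤ Type).map h).app C y.1, by
    calc ((m : (c ⥤ Type) ⥤ c ⥤ Type).map (toTerm Y)).app C
          (((m : (c ⥤ Type) ⥤ c ⥤ Type).map h).app C y.1)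
        = ((m : (c ⥤ Type) ⥤ c ⥤ Type).map (h ≫ toTerm Y)).app C y.1 := by
          rw [Functor.map_comp]; rfl
      _ = ((m : (c ⥤ Type) ⥤ c ⥤ Type).map (toTerm X)).app C y.1 := by
          rw [Subsingleton.elim (h ≫ toTerm Y) (toTerm X)]
      _ = _ := y.2⟩

lemma stepA_nat {X Y : c ⥤ Type} (h : X ⟶ Y)
    (u : arm.obj (op (posm.elementsMk C (compOp m arm em C M N))) ⟶ X) :
    stepA m arm em C M N Y (u ≫ h) = tA m arm em C M N h (stepA m arm em C M N X u) :=
  Subtype.ext (eEq_natX m arm em h C ⟨_, u⟩).symm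

/- Step B. -/

lemma evalPB
    (hM : ∀ {X Y : c ⥤ Type} (f : X ⟶ Y),
      IsPullback ((m : (c ⥤ Type) ⥤ c ⥤ Type).map ((m : (c ⥤ Type) ⥤ c ⥤ Type).map f))
        (m.μ.app X) (m.μ.app Y) ((m : (c ⥤ Type) ⥤ c ⥤ Type).map f))
    (X : c ⥤ Type) :
    IsPullback
      (((m : (c ⥤ Type) ⥤ c ⥤ Type).map ((m : (c ⥤ Type) ⥤ c ⥤ Type).map (toTerm X))).app C)
      ((m.μ.app X).app C) ((m.μ.app termPSh).app C)
      (((m : (c ⥤ Type) ⥤ c ⥤ Type).map (toTerm X)).app C) :=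
  (hM (toTerm X)).map ((evaluation c Type).obj C)

noncomputable def stepB
    (hM : ∀ {X Y : c ⥤ Type} (f : X ⟶ Y),
      IsPullback ((m : (c ⥤ Type) ⥤ c ⥤ Type).map ((m : (c ⥤ Type) ⥤ c ⥤ Type).map f))
        (m.μ.app X) (m.μ.app Y) ((m : (c ⥤ Type) ⥤ c ⥤ Type).map f))
    (X : c ⥤ Type) : Fib1 m arm em C M N X ≃ Fib2 m arm em C M N X :=
  (Equiv.subtypeEquivRight fun y => by rw [posToM_compOp m arm em C M N]).trans
    (pbFiber (evalPB m C hM X)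
      (eEq m arm em ((m : (c ⥤ Type) ⥤ c ⥤ Type).obj termPSh) C ⟨M, N ≫ posToM m arm em⟩)).symm

lemma stepB_snd
    (hM : ∀ {X Y : c ⥤ Type} (f : X ⟶ Y),
      IsPullback ((m : (c ⥤ Type) ⥤ c ⥤ Type).map ((m : (c ⥤ Type) ⥤ c ⥤ Type).map f))
        (m.μ.app X) (m.μ.app Y) ((m : (c ⥤ Type) ⥤ c ⥤ Type).map f))
    (X : c ⥤ Type) (y : Fib1 m arm em C M N X) :
    (m.μ.app X).app C (stepB m arm em C M N hM X y).1 = y.1 := by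
  have h1 := (pbFiber (evalPB m C hM X)
      (eEq m arm em ((m : (c ⥤ Type) ⥤ c ⥤ Type).obj termPSh) C
        ⟨M, N ≫ posToM m arm em⟩)).apply_symm_apply
      ⟨y.1, by rw [← posToM_compOp m arm em C M N]; exact y.2⟩
  exact congrArg Subtype.val h1

def tB {X Y : c ⥤ Type} (h : X ⟶ Y) (w : Fib2 m arm em C M N X) : Fib2 m arm em C M N Y :=
  ⟨((m : (c ⥤ Type) ⥤ c ⥤ Type).map ((m : (c ⥤ Type) ⥤ c ⥤ Type).map h)).app C w.1, by
    calc ((m : (c ⥤ Type) ⥤ c ⥤ Type).map ((m : (c ⥤ Type) ⥤ c ⥤ Type).map (toTerm Y))).app C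
          (((m : (c ⥤ Type) ⥤ c ⥤ Type).map ((m : (c ⥤ Type) ⥤ c ⥤ Type).map h)).app C w.1)
        = ((m : (c ⥤ Type) ⥤ c ⥤ Type).map
            ((m : (c ⥤ Type) ⥤ c ⥤ Type).map (h ≫ toTerm Y))).app C w.1 := by
          rw [Functor.map_comp, Functor.map_comp]; rfl
      _ = ((m : (c ⥤ Type) ⥤ c ⥤ Type).map
            ((m : (c ⥤ Type) ⥤ c ⥤ Type).map (toTerm X))).app C w.1 := by
          rw [Subsingleton.elim (h ≫ toTerm Y) (toTerm X)]
      _ = _ := w.2⟩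

lemma stepB_nat
    (hM : ∀ {X Y : c ⥤ Type} (f : X ⟶ Y),
      IsPullback ((m : (c ⥤ Type) ⥤ c ⥤ Type).map ((m : (c ⥤ Type) ⥤ c ⥤ Type).map f))
        (m.μ.app X) (m.μ.app Y) ((m : (c ⥤ Type) ⥤ c ⥤ Type).map f))
    {X Y : c ⥤ Type} (h : X ⟶ Y) (y : Fib1 m arm em C M N X) :
    stepB m arm em C M N hM Y (tA m arm em C M N h y)
      = tB m arm em C M N h (stepB m arm em C M N hM X y) := by
  apply Subtype.ext
  refine pb_ext (evalPB m C hM Y) ?_ ?_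
  · refine (stepB m arm em C M N hM Y (tA m arm em C M N h y)).2.trans ?_
    exact (tB m arm em C M N h (stepB m arm em C M N hM X y)).2.symm
  · refine (stepB_snd m arm em C M N hM Y (tA m arm em C M N h y)).trans ?_
    show ((m : (c ⥤ Type) ⥤ c ⥤ Type).map h).app C y.1 = _
    rw [← stepB_snd m arm em C M N hM X y]
    have h1 := types_congr_hom (NatTrans.congr_app (m.μ.naturality h) C)
      (stepB m arm em C M N hM X y).1
    exact h1.symm

/- Step C. -/

lemma fib2_sigma (X : c ⥤ Type) (w : Fib2 m arm em C M N X) :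
    (⟨((eEq m arm em ((m : (c ⥤ Type) ⥤ c ⥤ Type).obj X) C).symm w.1).1,
        ((eEq m arm em ((m : (c ⥤ Type) ⥤ c ⥤ Type).obj X) C).symm w.1).2
          ≫ (m : (c ⥤ Type) ⥤ c ⥤ Type).map (toTerm X)⟩ :
      Σ I : posm.obj C, arm.obj (op (posm.elementsMk C I)) ⟶
        (m : (c ⥤ Type) ⥤ c ⥤ Type).obj termPSh)
    = ⟨M, N ≫ posToM m arm em⟩ := by
  apply (eEq m arm em ((m : (c ⥤ Type) ⥤ c ⥤ Type).obj termPSh) C).injective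
  rw [← eEq_natX m arm em ((m : (c ⥤ Type) ⥤ c ⥤ Type).map (toTerm X)) C
    ((eEq m arm em ((m : (c ⥤ Type) ⥤ c ⥤ Type).obj X) C).symm w.1)]
  rw [Equiv.apply_symm_apply]
  exact w.2

def stepC (X : c ⥤ Type) : Fib2 m arm em C M N X ≃ GSet m arm em C M N X where
  toFun w := ⟨extr arm M ((eEq m arm em ((m : (c ⥤ Type) ⥤ c ⥤ Type).obj X) C).symm w.1)
      (congrArg Sigma.fst (fib2_sigma m arm em C M N X w)),
    (extr_comp arm M _ _ _).trans
      ((extr_congr arm (fib2_sigma m arm em C M N X w)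
        (congrArg Sigma.fst (fib2_sigma m arm em C M N X w)) rfl).trans (extr_mk arm _ rfl))⟩
  invFun g := ⟨eEq m arm em ((m : (c ⥤ Type) ⥤ c ⥤ Type).obj X) C ⟨M, g.1⟩, by
    rw [eEq_natX]
    exact congrArg (fun t => eEq m arm em ((m : (c ⥤ Type) ⥤ c ⥤ Type).obj termPSh) C
      ⟨M, t⟩) g.2⟩
  left_inv w := by
    apply Subtype.ext
    exact (congrArg (eEq m arm em ((m : (c ⥤ Type) ⥤ c ⥤ Type).obj X) C)
      (mk_extr arm M ((eEq m arm em ((m : (c ⥤ Type) ⥤ c ⥤ Type).obj X) C).symm w.1)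
        (congrArg Sigma.fst (fib2_sigma m arm em C M N X w)))).trans
      ((eEq m arm em ((m : (c ⥤ Type) ⥤ c ⥤ Type).obj X) C).apply_symm_apply w.1)
  right_inv g := by
    apply Subtype.ext
    have hq := (eEq m arm em ((m : (c ⥤ Type) ⥤ c ⥤ Type).obj X) C).symm_apply_apply ⟨M, g.1⟩
    exact (extr_congr arm hq (congrArg Sigma.fst hq) rfl).trans (extr_mk arm g.1 rfl)

lemma stepC_char (X : c ⥤ Type) (w : Fib2 m arm em C M N X) :
    eEq m arm em ((m : (c ⥤ Type) ⥤ c ⥤ Type).obj X) C ⟨M, (stepC m arm em C M N X w).1⟩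
      = w.1 :=
  (congrArg (eEq m arm em ((m : (c ⥤ Type) ⥤ c ⥤ Type).obj X) C)
      (mk_extr arm M ((eEq m arm em ((m : (c ⥤ Type) ⥤ c ⥤ Type).obj X) C).symm w.1)
        (congrArg Sigma.fst (fib2_sigma m arm em C M N X w)))).trans
    ((eEq m arm em ((m : (c ⥤ Type) ⥤ c ⥤ Type).obj X) C).apply_symm_apply w.1)

def tG {X Y : c ⥤ Type} (h : X ⟶ Y) (g : GSet m arm em C M N X) : GSet m arm em C M N Y :=
  ⟨g.1 ≫ (m : (c ⥤ Type) ⥤ c ⥤ Type).map h, by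
    rw [Category.assoc, ← Functor.map_comp, Subsingleton.elim (h ≫ toTerm Y) (toTerm X), g.2]⟩

lemma stepC_nat {X Y : c ⥤ Type} (h : X ⟶ Y) (w : Fib2 m arm em C M N X) :
    stepC m arm em C M N Y (tB m arm em C M N h w)
      = tG m arm em C M N h (stepC m arm em C M N X w) := by
  apply Subtype.ext
  apply eEq_snd_inj m arm em ((m : (c ⥤ Type) ⥤ c ⥤ Type).obj Y) C (I := M)
  rw [stepC_char]
  show ((m : (c ⥤ Type) ⥤ c ⥤ Type).map ((m : (c ⥤ Type) ⥤ c ⥤ Type).map h)).app C w.1 = _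
  rw [← stepC_char m arm em C M N X w, eEq_natX]
  rfl

/- Step D. -/

abbrev Dgm : (arm.obj (op (posm.elementsMk C M))).Elementsᵒᵖ ⥤ c ⥤ Type :=
  (CategoryOfElements.map N).op ⋙ arm

lemma heqAux {X : c ⥤ Type} {x : posm.Elements} {Y : c} {s s' : posm.obj Y}
    (a : x ⟶ posm.elementsMk Y s) (b : x ⟶ posm.elementsMk Y s') (hs : s = s')
    (hab : a.val = b.val) (v : arm.obj (op x) ⟶ X) :
    HEq (arm.map a.op ≫ v) (arm.map b.op ≫ v) := by
  subst hs
  have hab' : a = b := by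
    apply CategoryOfElements.ext
    exact hab
  subst hab'
  rfl

lemma keyJuggle (X : c ⥤ Type) {D D' : c} (f : D ⟶ D')
    (t : (arm.obj (op (posm.elementsMk C M))).obj D)
    (v : arm.obj (op (posm.elementsMk D (N.app D t))) ⟶ X) :
    (⟨posm.map f (N.app D t), arm.map (elHom posm f (N.app D t)).op ≫ v⟩ :
        Σ I : posm.obj D', arm.obj (op (posm.elementsMk D' I)) ⟶ X)
      = ⟨N.app D' ((arm.obj (op (posm.elementsMk C M))).map f t),
          arm.map ((CategoryOfElements.map N).map
            (elHom (arm.obj (op (posm.elementsMk C M))) f t)).op ≫ v⟩ := by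
  have hN : N.app D' ((arm.obj (op (posm.elementsMk C M))).map f t) = posm.map f (N.app D t) :=
    NatTrans.naturality_apply N f t
  refine (sigmaExt hN ?_).symm
  exact heqAux arm _ _ hN (by rfl) v

def ccApp (X : c ⥤ Type) (g : GSet m arm em C M N X)
    (z : (arm.obj (op (posm.elementsMk C M))).Elementsᵒᵖ) :
    (Dgm arm C M N).obj z ⟶ X :=
  extr arm (N.app z.unop.1 z.unop.2)
    ((eEq m arm em X z.unop.1).symm (g.1.app z.unop.1 z.unop.2))
    (fstEq m arm em _ _ (types_congr_hom (NatTrans.congr_app g.2 z.unop.1) z.unop.2))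

lemma ccApp_char (X : c ⥤ Type) (g : GSet m arm em C M N X)
    (z : (arm.obj (op (posm.elementsMk C M))).Elements) :
    eEq m arm em X z.1 ⟨N.app z.1 z.2, ccApp m arm em C M N X g (op z)⟩ = g.1.app z.1 z.2 :=
  (congrArg (eEq m arm em X z.1)
      (mk_extr arm (N.app z.1 z.2) ((eEq m arm em X z.1).symm (g.1.app z.1 z.2))
        (fstEq m arm em _ _ (types_congr_hom (NatTrans.congr_app g.2 z.1) z.2)))).trans
    ((eEq m arm em X z.1).apply_symm_apply _)

def toCocone (X : c ⥤ Type) (g : GSet m arm em C M N X) :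
    Dgm arm C M N ⟶ (Functor.const _).obj X where
  app := ccApp m arm em C M N X g
  naturality := by
    have key : ∀ (Dy Dx : c) (f : Dy ⟶ Dx) (t : (arm.obj (op (posm.elementsMk C M))).obj Dy)
        (s : (arm.obj (op (posm.elementsMk C M))).obj Dx)
        (hf : (arm.obj (op (posm.elementsMk C M))).map f t = s),
        (Dgm arm C M N).map (CategoryOfElements.homMk
            ((arm.obj (op (posm.elementsMk C M))).elementsMk Dy t)
            ((arm.obj (op (posm.elementsMk C M))).elementsMk Dx s) f hf).op
          ≫ ccApp m arm em C M N X g (op ((arm.obj (op (posm.elementsMk C M))).elementsMk Dy t))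
        = ccApp m arm em C M N X g
            (op ((arm.obj (op (posm.elementsMk C M))).elementsMk Dx s)) := by
      intro Dy Dx f t s hf
      cases hf
      apply eEq_snd_inj m arm em X Dx
        (I := N.app Dx ((arm.obj (op (posm.elementsMk C M))).map f t))
      calc eEq m arm em X Dx ⟨N.app Dx ((arm.obj (op (posm.elementsMk C M))).map f t),
              (Dgm arm C M N).map (elHom (arm.obj (op (posm.elementsMk C M))) f t).op
                ≫ ccApp m arm em C M N X g (op ⟨Dy, t⟩)⟩
          = eEq m arm em X Dx ⟨posm.map f (N.app Dy t),
              arm.map (elHom posm f (N.app Dy t)).op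
                ≫ ccApp m arm em C M N X g (op ⟨Dy, t⟩)⟩ :=
            (congrArg (eEq m arm em X Dx) (keyJuggle arm C M N X f t _)).symm
        _ = ((m : (c ⥤ Type) ⥤ c ⥤ Type).obj X).map f
              (eEq m arm em X Dy ⟨N.app Dy t, ccApp m arm em C M N X g (op ⟨Dy, t⟩)⟩) :=
            (eEq_natC m arm em X f
              ⟨N.app Dy t, ccApp m arm em C M N X g (op ⟨Dy, t⟩)⟩).symm
        _ = ((m : (c ⥤ Type) ⥤ c ⥤ Type).obj X).map f (g.1.app Dy t) :=
            congrArg (((m : (c ⥤ Type) ⥤ c ⥤ Type).obj X).map f)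
              (ccApp_char m arm em C M N X g ⟨Dy, t⟩)
        _ = g.1.app Dx ((arm.obj (op (posm.elementsMk C M))).map f t) :=
            (NatTrans.naturality_apply g.1 f t).symm
        _ = eEq m arm em X Dx ⟨N.app Dx ((arm.obj (op (posm.elementsMk C M))).map f t),
              ccApp m arm em C M N X g
                (op ⟨Dx, (arm.obj (op (posm.elementsMk C M))).map f t⟩)⟩ :=
            (ccApp_char m arm em C M N X g ⟨Dx, _⟩).symm
    intro z z' u
    obtain ⟨⟨Dz, tz⟩⟩ := z
    obtain ⟨⟨Dz', tz'⟩⟩ := z'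
    obtain ⟨⟨f, hf⟩⟩ := u
    simp only [Functor.const_obj_map, Category.comp_id]
    exact key Dz' Dz f tz' tz hf

def fromCocone (X : c ⥤ Type) (κ : Dgm arm C M N ⟶ (Functor.const _).obj X) :
    GSet m arm em C M N X :=
  ⟨{ app := fun D => TypeCat.ofHom fun t => eEq m arm em X D
        ⟨N.app D t, κ.app (op ((arm.obj (op (posm.elementsMk C M))).elementsMk D t))⟩
     naturality := by
      intro D D' f
      ext t
      have h3 : arm.map ((CategoryOfElements.map N).map
            (elHom (arm.obj (op (posm.elementsMk C M))) f t)).op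
          ≫ κ.app (op ((arm.obj (op (posm.elementsMk C M))).elementsMk D t))
          = κ.app (op ((arm.obj (op (posm.elementsMk C M))).elementsMk D'
              ((arm.obj (op (posm.elementsMk C M))).map f t))) := by
        simpa using κ.naturality (elHom (arm.obj (op (posm.elementsMk C M))) f t).op
      have hstep := (eEq_natC m arm em X f
          ⟨N.app D t, κ.app (op ((arm.obj (op (posm.elementsMk C M))).elementsMk D t))⟩).trans
        ((congrArg (eEq m arm em X D') (keyJuggle arm C M N X f t
            (κ.app (op ((arm.obj (op (posm.elementsMk C M))).elementsMk D t))))).trans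
          (congrArg (fun w => eEq m arm em X D'
            ⟨N.app D' ((arm.obj (op (posm.elementsMk C M))).map f t), w⟩) h3))
      exact hstep.symm },
   by
    apply NatTrans.ext
    funext D
    ext t
    show ((m : (c ⥤ Type) ⥤ c ⥤ Type).map (toTerm X)).app D (eEq m arm em X D _) = _
    rw [eEq_natX]
    exact congrArg (eEq m arm em termPSh D) (congrArg (Sigma.mk _) (Subsingleton.elim _ _))⟩

def stepD (X : c ⥤ Type) :
    GSet m arm em C M N X ≃ (Dgm arm C M N ⟶ (Functor.const _).obj X) where
  toFun := toCocone m arm em C M N X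
  invFun := fromCocone m arm em C M N X
  left_inv g := by
    apply Subtype.ext
    apply NatTrans.ext
    funext D
    ext t
    exact ccApp_char m arm em C M N X g ⟨D, t⟩
  right_inv κ := by
    apply NatTrans.ext
    funext z
    obtain ⟨⟨D, t⟩⟩ := z
    exact eEq_snd_inj m arm em X D
      ((ccApp_char m arm em C M N X (fromCocone m arm em C M N X κ) ⟨D, t⟩).trans rfl)

def tK {X Y : c ⥤ Type} (h : X ⟶ Y) (κ : Dgm arm C M N ⟶ (Functor.const _).obj X) :
    Dgm arm C M N ⟶ (Functor.const _).obj Y :=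
  κ ≫ (Functor.const _).map h

lemma stepD_nat {X Y : c ⥤ Type} (h : X ⟶ Y) (g : GSet m arm em C M N X) :
    stepD m arm em C M N Y (tG m arm em C M N h g)
      = tK arm C M N h (stepD m arm em C M N X g) := by
  apply NatTrans.ext
  funext z
  obtain ⟨⟨D, t⟩⟩ := z
  apply eEq_snd_inj m arm em Y D (I := N.app D t)
  refine (ccApp_char m arm em C M N Y (tG m arm em C M N h g) ⟨D, t⟩).trans ?_
  refine (congrArg (((m : (c ⥤ Type) ⥤ c ⥤ Type).map h).app D)
      (ccApp_char m arm em C M N X g ⟨D, t⟩).symm).trans ?_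
  exact eEq_natX m arm em h D ⟨N.app D t, ccApp m arm em C M N X g (op ⟨D, t⟩)⟩

/- Step E. -/

noncomputable def stepE (X : c ⥤ Type) :
    (Dgm arm C M N ⟶ (Functor.const _).obj X) ≃ (colimit (Dgm arm C M N) ⟶ X) where
  toFun κ := colimit.desc _ ⟨X, κ⟩
  invFun u :=
    { app := fun z => colimit.ι (Dgm arm C M N) z ≫ u
      naturality := by
        intro a b f
        simp only [Functor.const_obj_map, Category.comp_id, ← Category.assoc]
        exact congrArg (fun q => q ≫ u) (colimit.w (Dgm arm C M N) f) }
  left_inv κ := by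
    apply NatTrans.ext
    funext z
    exact colimit.ι_desc ⟨X, κ⟩ z
  right_inv u := by
    apply colimit.hom_ext
    intro z
    exact colimit.ι_desc _ _

lemma stepE_nat {X Y : c ⥤ Type} (h : X ⟶ Y)
    (κ : Dgm arm C M N ⟶ (Functor.const _).obj X) :
    stepE arm C M N Y (tK arm C M N h κ) = stepE arm C M N X κ ≫ h := by
  apply colimit.hom_ext
  intro z
  show colimit.ι (Dgm arm C M N) z ≫ colimit.desc _ ⟨Y, tK arm C M N h κ⟩
    = colimit.ι (Dgm arm C M N) z ≫ colimit.desc _ ⟨X, κ⟩ ≫ h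
  rw [colimit.ι_desc, colimit.ι_desc_assoc]
  rfl

/- Assembly. -/

noncomputable def Phi
    (hM : ∀ {X Y : c ⥤ Type} (f : X ⟶ Y),
      IsPullback ((m : (c ⥤ Type) ⥤ c ⥤ Type).map ((m : (c ⥤ Type) ⥤ c ⥤ Type).map f))
        (m.μ.app X) (m.μ.app Y) ((m : (c ⥤ Type) ⥤ c ⥤ Type).map f))
    (X : c ⥤ Type) :
    (arm.obj (op (posm.elementsMk C (compOp m arm em C M N))) ⟶ X) ≃
      (colimit ((CategoryOfElements.map N).op ⋙ arm) ⟶ X) :=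
  ((((stepA m arm em C M N X).trans (stepB m arm em C M N hM X)).trans
    (stepC m arm em C M N X)).trans (stepD m arm em C M N X)).trans (stepE arm C M N X)

lemma Phi_nat
    (hM : ∀ {X Y : c ⥤ Type} (f : X ⟶ Y),
      IsPullback ((m : (c ⥤ Type) ⥤ c ⥤ Type).map ((m : (c ⥤ Type) ⥤ c ⥤ Type).map f))
        (m.μ.app X) (m.μ.app Y) ((m : (c ⥤ Type) ⥤ c ⥤ Type).map f))
    {X Y : c ⥤ Type} (h : X ⟶ Y)
    (u : arm.obj (op (posm.elementsMk C (compOp m arm em C M N))) ⟶ X) :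
    Phi m arm em C M N hM Y (u ≫ h) = Phi m arm em C M N hM X u ≫ h := by
  show stepE arm C M N Y (stepD m arm em C M N Y (stepC m arm em C M N Y
      (stepB m arm em C M N hM Y (stepA m arm em C M N Y (u ≫ h))))) = _
  rw [stepA_nat m arm em C M N h u, stepB_nat m arm em C M N hM h _,
    stepC_nat m arm em C M N h _, stepD_nat m arm em C M N h _,
    stepE_nat arm C M N h _]
  rfl

lemma Phi_symm_nat
    (hM : ∀ {X Y : c ⥤ Type} (f : X ⟶ Y),
      IsPullback ((m : (c ⥤ Type) ⥤ c ⥤ Type).map ((m : (c ⥤ Type) ⥤ c ⥤ Type).map f))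
        (m.μ.app X) (m.μ.app Y) ((m : (c ⥤ Type) ⥤ c ⥤ Type).map f))
    {X Y : c ⥤ Type} (h : X ⟶ Y)
    (v : colimit ((CategoryOfElements.map N).op ⋙ arm) ⟶ X) :
    (Phi m arm em C M N hM Y).symm (v ≫ h) = (Phi m arm em C M N hM X).symm v ≫ h := by
  apply (Phi m arm em C M N hM Y).injective
  rw [Equiv.apply_symm_apply, Phi_nat m arm em C M N hM h, Equiv.apply_symm_apply]

end Aux13

/-- If `m` is a familial monad on `c ⥤ Type` whose multiplication is
cartesian, then the arity of the composite operation `μ(M, N)` is isomorphic to the colimit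
`colim_{z ∈ el(m[M])} m[N(z)]`, indexed by the category of elements of the arity `m[M]`. -/
theorem comp_arity_colimit_of_cartesian_mult
    (hMultCartesian : ∀ {X Y : c ⥤ Type} (f : X ⟶ Y),
      IsPullback ((m : (c ⥤ Type) ⥤ c ⥤ Type).map ((m : (c ⥤ Type) ⥤ c ⥤ Type).map f))
        (m.μ.app X) (m.μ.app Y) ((m : (c ⥤ Type) ⥤ c ⥤ Type).map f))
    (C : c) (M : posm.obj C) (N : arm.obj (op (posm.elementsMk C M)) ⟶ posm) :
    Nonempty (arm.obj (op (posm.elementsMk C (compOp m arm em C M N))) ≅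
      Limits.colimit ((CategoryOfElements.map N).op ⋙ arm)) := by
  refine ⟨{ hom := (Phi m arm em C M N hMultCartesian _).symm (𝟙 _)
            inv := Phi m arm em C M N hMultCartesian _ (𝟙 _)
            hom_inv_id := ?_
            inv_hom_id := ?_ }⟩
  · apply (Phi m arm em C M N hMultCartesian _).injective
    rw [Phi_nat m arm em C M N hMultCartesian, Equiv.apply_symm_apply, Category.id_comp]
  · apply (Phi m arm em C M N hMultCartesian _).symm.injective
    rw [Phi_symm_nat m arm em C M N hMultCartesian, Equiv.symm_apply_apply, Category.id_comp]

end Statement13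

end Fam
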